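/- Let ū ∈ (0, 1), p ∈ (0, 1], and let u : ℤ → ℝ satisfy u_c → 0 as c → +∞ and u_c → 0 as c → −∞. Assume the fixed-point equations ū·(u_{c−1} − u_c) = u_c − u_{c+1} for every integer c ≥ 1, and ū·(u_{c−1} − u_c) = p·(u_c − u_{c+1}) for every integer c ≤ −1. Then u_c = u₀·ū^c for all integers c ≥ 0, and u_c = u₀·(ū/p)^c for all integers c ≤ 0. In particular, if u₀ > 0 then p < ū, so u is an asymmetric Laplace profile: u_c = u₀·e^{−ac} for c ≥ 0 and u_c = u₀·e^{bc} for c ≤ 0, where a = −ln(ū) > 0 and b = ln(ū/p) > 0. -/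

import Mathlib

open Filter

/-- Fixed point of the mean-field equations: the equilibrium distribution of
money is an asymmetric Laplace profile. Here `ub` is the equilibrium fraction
of individuals able to give a coin and `p` the equilibrium probability that a
bank is nonempty. -/
theorem fixed_point_laplace (ub p : ℝ) (hub0 : 0 < ub) (hub1 : ub < 1)
    (hp0 : 0 < p) (hp1 : p ≤ 1) (u : ℤ → ℝ)
    (htop : Tendsto u atTop (nhds 0)) (hbot : Tendsto u atBot (nhds 0))
    (hpos : ∀ c : ℤ, 1 ≤ c → ub * (u (c - 1) - u c) = u c - u (c + 1))
    (hneg : ∀ c : ℤ, c ≤ -1 → ub * (u (c - 1) - u c) = p * (u c - u (c + 1))) :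
    (∀ c : ℤ, 0 ≤ c → u c = u 0 * ub ^ c) ∧
    (∀ c : ℤ, c ≤ 0 → u c = u 0 * (ub / p) ^ c) ∧
    (0 < u 0 →
      p < ub ∧ 0 < -Real.log ub ∧ 0 < Real.log (ub / p) ∧
      (∀ c : ℤ, 0 ≤ c → u c = u 0 * Real.exp (-(-Real.log ub) * (c : ℝ))) ∧
      (∀ c : ℤ, c ≤ 0 → u c = u 0 * Real.exp (Real.log (ub / p) * (c : ℝ)))) := by
  have hubne : ub ≠ 0 := ne_of_gt hub0
  have hpne : p ≠ 0 := ne_of_gt hp0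
  have hdne : ub / p ≠ 0 := div_ne_zero hubne hpne
  -- positive side: u (c+1) - ub * u c is constant for c ≥ 0
  have hv : ∀ c : ℤ, 0 ≤ c → u (c + 1) - ub * u c = u 1 - ub * u 0 := by
    intro c hc
    refine Int.le_induction (motive := fun c _ => u (c + 1) - ub * u c = u 1 - ub * u 0) ?_ ?_ c hc
    · norm_num
    · intro n hn ih
      have h := hpos (n + 1) (by linarith)
      have e : (n : ℤ) + 1 - 1 = n := by ring
      rw [e] at h
      linarith
  have hK : u 1 - ub * u 0 = 0 := by
    have h1 : Tendsto (fun c : ℤ => u (c + 1) - ub * u c) atTop (nhds 0) := by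
      have ht : Tendsto (fun c : ℤ => u (c + 1)) atTop (nhds 0) :=
        htop.comp (tendsto_atTop_add_const_right _ 1 tendsto_id)
      simpa using ht.sub (htop.const_mul ub)
    have h2 : Tendsto (fun c : ℤ => u (c + 1) - ub * u c) atTop
        (nhds (u 1 - ub * u 0)) := by
      refine Tendsto.congr' ?_ tendsto_const_nhds
      filter_upwards [eventually_ge_atTop (0 : ℤ)] with c hc
      exact (hv c hc).symm
    exact tendsto_nhds_unique h2 h1
  have hstep : ∀ c : ℤ, 0 ≤ c → u (c + 1) = ub * u c := by
    intro c hc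
    have := hv c hc
    linarith
  have hposform : ∀ c : ℤ, 0 ≤ c → u c = u 0 * ub ^ c := by
    intro c hc
    refine Int.le_induction (motive := fun c _ => u c = u 0 * ub ^ c) ?_ ?_ c hc
    · simp
    · intro n hn ih
      rw [hstep n hn, ih, zpow_add_one₀ hubne]
      ring
  -- negative side: ub * u (c-1) - p * u c is constant for c ≤ 0
  have hw : ∀ c : ℤ, c ≤ 0 → ub * u (c - 1) - p * u c = ub * u (-1) - p * u 0 := by
    intro c hc
    refine Int.le_induction_down (motive := fun c _ => ub * u (c - 1) - p * u c = ub * u (-1) - p * u 0) ?_ ?_ c hc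
    · norm_num
    · intro n hn ih
      have h := hneg (n - 1) (by linarith)
      have e : (n : ℤ) - 1 + 1 = n := by ring
      rw [e] at h
      linarith
  have hW : ub * u (-1) - p * u 0 = 0 := by
    have h1 : Tendsto (fun c : ℤ => ub * u (c - 1) - p * u c) atBot (nhds 0) := by
      have ht : Tendsto (fun c : ℤ => u (c - 1)) atBot (nhds 0) :=
        hbot.comp (tendsto_atBot_add_const_right _ (-1) tendsto_id)
      simpa using (ht.const_mul ub).sub (hbot.const_mul p)
    have h2 : Tendsto (fun c : ℤ => ub * u (c - 1) - p * u c) atBot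
        (nhds (ub * u (-1) - p * u 0)) := by
      refine Tendsto.congr' ?_ tendsto_const_nhds
      filter_upwards [eventually_le_atBot (0 : ℤ)] with c hc
      exact (hw c hc).symm
    exact tendsto_nhds_unique h2 h1
  have hstepn : ∀ c : ℤ, c ≤ 0 → ub * u (c - 1) = p * u c := by
    intro c hc
    have := hw c hc
    linarith
  have hnegform : ∀ c : ℤ, c ≤ 0 → u c = u 0 * (ub / p) ^ c := by
    intro c hc
    refine Int.le_induction_down (motive := fun c _ => u c = u 0 * (ub / p) ^ c) ?_ ?_ c hc
    · simp
    · intro n hn ih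
      have h := hstepn n hn
      have hun : u (n - 1) = (p / ub) * u n := by
        field_simp at h ⊢
        linarith
      rw [hun, ih, zpow_sub_one₀ hdne]
      field_simp
  refine ⟨hposform, hnegform, fun hu0 => ?_⟩
  have hplt : p < ub := by
    by_contra hle
    push_neg at hle
    have hd1 : ub / p ≤ 1 := (div_le_one hp0).mpr hle
    have key : ∀ c : ℤ, c ≤ 0 → u 0 ≤ u c := by
      intro c hc
      have h1 : (1 : ℝ) ≤ (ub / p) ^ c :=
        one_le_zpow_of_nonpos₀ (div_pos hub0 hp0) hd1 hc
      calc u 0 = u 0 * 1 := by ring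
        _ ≤ u 0 * (ub / p) ^ c := by nlinarith
        _ = u c := (hnegform c hc).symm
    have hev : ∀ᶠ c in atBot, u c < u 0 := hbot.eventually_lt_const hu0
    obtain ⟨c, hc1, hc2⟩ := ((eventually_le_atBot (0 : ℤ)).and hev).exists
    exact absurd (key c hc1) (not_le.mpr hc2)
  have hlog1 : 0 < -Real.log ub := by
    have := Real.log_neg hub0 hub1
    linarith
  have hd1 : 1 < ub / p := (one_lt_div hp0).mpr hplt
  have hlog2 : 0 < Real.log (ub / p) := Real.log_pos hd1
  have hzexp : ∀ (x : ℝ), 0 < x → ∀ c : ℤ, x ^ c = Real.exp (Real.log x * c) := by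
    intro x hx c
    rw [← Real.rpow_intCast, Real.rpow_def_of_pos hx]
  refine ⟨hplt, hlog1, hlog2, fun c hc => ?_, fun c hc => ?_⟩
  · rw [hposform c hc, hzexp ub hub0 c, neg_neg]
  · rw [hnegform c hc, hzexp (ub / p) (div_pos hub0 hp0) c]
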